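/- Let $p,p'$ be coprime with $p < p' < 2p$. Define $\nu_0,\dots,\nu_n$ by the continued fraction expansion $\frac{p'}{p'-p} = 1 + \nu_0 + \cfrac{1}{\nu_1 + \cfrac{1}{\nu_2 + \cdots + \cfrac{1}{\nu_n + 2}}}$, and set $t_i = \sum_{j=0}^{i-1}\nu_j$ for $1 \le i \le n+1$, $t_0 = -1$. Define $y_{-1}=0$, $y_0=1$, $y_{m+1} = y_{m-1} + (\nu_m + \delta_{m,0} + 2\delta_{m,n})y_m$, and Takahashi lengths $l_{j+1} = y_{m-1} + (j - t_m)y_m$ for $t_m < j \le t_{m+1} + \delta_{m,n}$, $0 \le m \le n$. Then every integer $b$ with $1 \le b < p'$ admits a unique decomposition $b = \sum_{i=1}^{k} l_{\beta_i+1}$ where the indices satisfy $t_{\xi_i} < \beta_i \le t_{\xi_i+1} + \delta_{\xi_i,n}$ with $0 \le \xi_1 < \xi_2 < \cdots < \xi_k \le n$, and additionally $\xi_{i+1} \ge \xi_i + 2$ whenever $\beta_i = t_{\xi_i+1}$. -/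

import Mathlib

open Finset

/-- The continued fraction $\nu_i + \cfrac{1}{\nu_{i+1} + \cdots + \cfrac{1}{\nu_n + 2}}$,
computed with `k` remaining steps (so `cf ν k i` with `k = n - i` gives the tail
starting at zone `i`, the innermost term being $\nu_n + 2$). -/
def cf (ν : ℕ → ℕ) : ℕ → ℕ → ℚ
  | 0, i => ν i + 2
  | k + 1, i => ν i + 1 / cf ν k (i + 1)

/-- The partial sums $t_i = \sum_{j=0}^{i-1}\nu_j$ (for $i\ge1$), with $t_0 = -1$. -/
def tt (ν : ℕ → ℕ) (i : ℕ) : ℤ :=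
  if i = 0 then -1 else ∑ j ∈ Finset.range i, (ν j : ℤ)

/-- The sequence $y_{-1}=0$, $y_0=1$,
$y_{m+1}=y_{m-1}+(\nu_m+\delta_{m,0}+2\delta_{m,n})y_m$, indexed so that
`yy ν n k` is $y_{k-1}$. -/
def yy (ν : ℕ → ℕ) (n : ℕ) : ℕ → ℤ
  | 0 => 0
  | 1 => 1
  | m + 2 => yy ν n m +
      ((ν m : ℤ) + (if m = 0 then 1 else 0) + (if m = n then 2 else 0)) * yy ν n (m + 1)

namespace TS

/-- continuant -/
def cont : List ℤ → ℤ
  | [] => 1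
  | [a] => a
  | a :: b :: l => a * cont (b :: l) + cont l

theorem cont_append : ∀ (l : List ℤ) (b a : ℤ),
    cont (b :: l ++ [a]) = a * cont (b :: l) + cont ((b :: l).dropLast)
  | [], b, a => by simp [cont]; ring
  | [c], b, a => by simp [cont]; ring
  | c :: d :: l', b, a => by
    have h1 := cont_append (d :: l') c a
    have h2 := cont_append l' d a
    simp only [List.cons_append, List.append_eq, cont, List.dropLast] at *
    rw [h1, h2]; ring

/-- the coefficients for yy -/
def cc (ν : ℕ → ℕ) (n : ℕ) (i : ℕ) : ℤ :=
  (ν i : ℤ) + (if i = 0 then 1 else 0) + (if i = n then 2 else 0)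

theorem yy_eq_cont (ν : ℕ → ℕ) (n : ℕ) :
    ∀ m, yy ν n (m + 1) = cont ((List.range m).map (cc ν n))
  | 0 => by simp [yy, cont]
  | 1 => by simp [yy, cont, cc]
  | m + 2 => by
    have h1 := yy_eq_cont ν n m
    have h2 := yy_eq_cont ν n (m + 1)
    have hr : (List.range (m + 2)).map (cc ν n)
        = (cc ν n 0) :: ((List.range (m + 1)).map (cc ν n)).tail ++ [cc ν n (m + 1)] := by
      rw [List.range_succ, List.map_append]
      congr 1
      rcases m with _ | m
      · simp [List.range_succ]
      · rw [List.range_succ (n := m + 1), List.map_append]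
        simp [List.range_succ_eq_map]
    have hr1 : (List.range (m + 1)).map (cc ν n)
        = (cc ν n 0) :: ((List.range (m + 1)).map (cc ν n)).tail := by
      rw [List.range_succ_eq_map]; simp
    rw [hr, cont_append, ← hr1]
    show yy ν n (m + 2 + 1) = _
    rw [show yy ν n (m + 2 + 1) = yy ν n (m + 1) + cc ν n (m + 1) * yy ν n (m + 2) from rfl]
    rw [h1, h2, hr1]
    have : ((cc ν n 0) :: ((List.range (m + 1)).map (cc ν n)).tail).dropLast
        = (List.range m).map (cc ν n) := by
      rw [← hr1, ← List.map_dropLast]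
      congr 1
      rw [List.range_succ]
      simp
    rw [this]; ring

end TS

namespace TS

def bb (ν : ℕ → ℕ) (n : ℕ) (i : ℕ) : ℤ := (ν i : ℤ) + (if i = n then 2 else 0)

def kkAux (ν : ℕ → ℕ) (n : ℕ) : ℕ → ℕ → ℤ
  | 0, _ => 1
  | 1, j => bb ν n j
  | k + 2, j => bb ν n j * kkAux ν n (k + 1) (j + 1) + kkAux ν n k (j + 2)

theorem kkAux_cont (ν : ℕ → ℕ) (n : ℕ) :
    ∀ k j, kkAux ν n k j = cont ((List.range k).map fun t => bb ν n (j + t))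
  | 0, j => by simp [kkAux, cont]
  | 1, j => by simp [kkAux, List.range_succ, cont]
  | k + 2, j => by
    have h1 := kkAux_cont ν n (k + 1) (j + 1)
    have h2 := kkAux_cont ν n k (j + 2)
    have hr : (List.range (k + 2)).map (fun t => bb ν n (j + t))
        = bb ν n j :: (List.range (k + 1)).map (fun t => bb ν n (j + 1 + t)) := by
      rw [List.range_succ_eq_map]
      simp only [List.map_cons, List.map_map, Nat.add_zero]
      congr 1
      apply List.map_congr_left
      intro t _
      simp [Function.comp]
      congr 1
      omega
    have hr2 : (List.range (k + 1)).map (fun t => bb ν n (j + 1 + t))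
        = bb ν n (j + 1) :: (List.range k).map (fun t => bb ν n (j + 2 + t)) := by
      rw [List.range_succ_eq_map]
      simp only [List.map_cons, List.map_map, Nat.add_zero]
      congr 1
      apply List.map_congr_left
      intro t _
      simp [Function.comp]
      congr 1
      omega
    rw [show kkAux ν n (k+2) j = bb ν n j * kkAux ν n (k + 1) (j + 1) + kkAux ν n k (j + 2)
      from rfl, hr, hr2, cont, ← hr2, h1, h2]

theorem kkAux_pos (ν : ℕ → ℕ) (n : ℕ) (hν : ∀ i, i ≤ n → 1 ≤ ν i) :
    ∀ k j, j + k ≤ n + 1 → 1 ≤ kkAux ν n k j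
  | 0, j => fun _ => le_refl 1
  | 1, j => fun h => by
    have := hν j (by omega)
    simp only [kkAux, bb]
    split <;> push_cast <;> omega
  | k + 2, j => fun h => by
    have h1 := kkAux_pos ν n hν (k + 1) (j + 1) (by omega)
    have h2 := kkAux_pos ν n hν k (j + 2) (by omega)
    have hb : 1 ≤ bb ν n j := by
      have := hν j (by omega)
      simp only [bb]; split <;> push_cast <;> omega
    show 1 ≤ bb ν n j * kkAux ν n (k + 1) (j + 1) + kkAux ν n k (j + 2)
    nlinarith

theorem kkAux_coprime (ν : ℕ → ℕ) (n : ℕ) :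
    ∀ k j, IsCoprime (kkAux ν n (k + 1) j) (kkAux ν n k (j + 1))
  | 0, j => isCoprime_one_right
  | k + 1, j => by
    have ih := kkAux_coprime ν n k (j + 1)
    show IsCoprime (bb ν n j * kkAux ν n (k + 1) (j + 1) + kkAux ν n k (j + 2))
      (kkAux ν n (k + 1) (j + 1))
    have := (ih.symm).add_mul_right_left (bb ν n j)
    convert this using 1
    exacts [rfl, by ring]

theorem cf_eq (ν : ℕ → ℕ) (n : ℕ) (hν : ∀ i, i ≤ n → 1 ≤ ν i) :
    ∀ k i, i + k = n →
      cf ν k i = (kkAux ν n (k + 1) i : ℚ) / (kkAux ν n k (i + 1) : ℚ)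
  | 0, i => fun h => by
    subst h
    simp [cf, kkAux, bb]
  | k + 1, i => fun h => by
    have ih := cf_eq ν n hν k (i + 1) (by omega)
    have hpos1 : 1 ≤ kkAux ν n (k + 1) (i + 1) := kkAux_pos ν n hν (k + 1) (i + 1) (by omega)
    have hpos2 : 1 ≤ kkAux ν n k (i + 2) := kkAux_pos ν n hν k (i + 2) (by omega)
    have hq1 : (0 : ℚ) < (kkAux ν n (k + 1) (i + 1) : ℚ) := by exact_mod_cast hpos1
    have hq2 : (0 : ℚ) < (kkAux ν n k (i + 2) : ℚ) := by exact_mod_cast hpos2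
    have hbi : bb ν n i = (ν i : ℤ) := by
      simp only [bb]
      rw [if_neg (by omega)]
      ring
    show (ν i : ℚ) + 1 / cf ν k (i + 1) = _
    rw [ih]
    rw [show kkAux ν n (k + 1 + 1) i
      = bb ν n i * kkAux ν n (k + 1) (i + 1) + kkAux ν n k (i + 2) from rfl, hbi]
    have hcf : cf ν k (i + 1) = (kkAux ν n (k + 1) (i + 1) : ℚ) / (kkAux ν n k (i + 1 + 1) : ℚ) := ih
    push_cast
    rw [one_div_div]
    field_simp

theorem cont_head_add_one (a : ℤ) (l : List ℤ) :
    cont ((a + 1) :: l) = cont (a :: l) + cont l := by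
  cases l with
  | nil => simp [cont]
  | cons b l => simp [cont]; ring

theorem pp_eq (p p' n : ℕ) (ν : ℕ → ℕ)
    (hco : Nat.Coprime p p') (h1 : p < p')
    (hν : ∀ i, i ≤ n → 1 ≤ ν i)
    (hcf : (p' : ℚ) / ((p' : ℚ) - p) = 1 + cf ν n 0) :
    (p' : ℤ) = yy ν n (n + 2) := by
  set A := kkAux ν n (n + 1) 0 with hA
  set B := kkAux ν n n 1 with hB
  have hApos : 1 ≤ A := kkAux_pos ν n hν (n + 1) 0 (by omega)
  have hBpos : 1 ≤ B := kkAux_pos ν n hν n 1 (by omega)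
  -- yy (n+2) = A + B
  have hyy : yy ν n (n + 2) = A + B := by
    rw [show n + 2 = (n + 1) + 1 from rfl, yy_eq_cont]
    rw [hA, hB, kkAux_cont, kkAux_cont]
    have hlistc : (List.range (n + 1)).map (cc ν n)
        = (bb ν n 0 + 1) :: (List.range n).map (fun t => bb ν n (1 + t)) := by
      rw [List.range_succ_eq_map]
      simp only [List.map_cons, List.map_map]
      congr 1
      · simp only [cc, bb]
        by_cases h0 : (0 : ℕ) = n <;> simp [h0] <;> ring
      · apply List.map_congr_left
        intro t _
        simp only [Function.comp, cc, bb]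
        rw [if_neg (by omega)]
        ring_nf
        rw [Nat.add_comm 1 t]
    have hlistb : (List.range (n + 1)).map (fun t => bb ν n (0 + t))
        = bb ν n 0 :: (List.range n).map (fun t => bb ν n (1 + t)) := by
      rw [List.range_succ_eq_map]
      simp only [List.map_cons, List.map_map, Nat.add_zero, Nat.zero_add]
      congr 1
      apply List.map_congr_left
      intro t _
      simp only [Function.comp]
      congr 1
      omega
    rw [hlistc, hlistb, cont_head_add_one]
  -- continued fraction value
  have hcf0 : cf ν n 0 = (A : ℚ) / (B : ℚ) := by
    rw [hA, hB]
    exact cf_eq ν n hν n 0 (by omega)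
  have hBq : (0 : ℚ) < (B : ℚ) := by exact_mod_cast hBpos
  have hden : (0 : ℚ) < (p' : ℚ) - p := by
    have : (p : ℚ) < p' := by exact_mod_cast h1
    linarith
  -- cross multiply
  have hZ : (p' : ℤ) * B = ((p' : ℤ) - p) * (A + B) := by
    have hq : (p' : ℚ) * B = ((p' : ℚ) - p) * (A + B) := by
      have := hcf
      rw [hcf0] at this
      field_simp at this
      linarith [this]
    exact_mod_cast hq
  -- coprimality
  have hcop1 : IsCoprime (p' : ℤ) ((p' : ℤ) - p) := by
    have h : IsCoprime (p' : ℤ) (p : ℤ) := by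
      rw [Int.isCoprime_iff_gcd_eq_one]
      simpa [Int.gcd, Nat.coprime_comm] using hco.symm
    have := (h.neg_right).add_mul_left_right 1
    simpa [sub_eq_add_neg, add_comm] using this
  have hcop2 : IsCoprime (A + B) B := by
    have h : IsCoprime A B := kkAux_coprime ν n n 0
    have := h.add_mul_right_left 1
    simpa using this
  -- divisibility both ways
  have hd1 : (p' : ℤ) ∣ (A + B) := by
    have : (p' : ℤ) ∣ ((p' : ℤ) - p) * (A + B) := ⟨B, hZ.symm⟩
    exact (IsCoprime.dvd_of_dvd_mul_left hcop1 this)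
  have hd2 : (A + B) ∣ (p' : ℤ) := by
    have : (A + B) ∣ (p' : ℤ) * B := ⟨(p' : ℤ) - p, by linarith [hZ]⟩
    exact (IsCoprime.dvd_of_dvd_mul_right hcop2 this)
  rw [hyy]
  exact Int.dvd_antisymm (by positivity) (by omega) hd1 hd2

end TS

namespace TS

variable (ν : ℕ → ℕ) (n : ℕ)

def Tm (m : ℕ) : ℕ := ∑ i ∈ Finset.range m, ν i

def zz (j : ℕ) : ℕ := Nat.findGreatest (fun m => Tm ν m < j) n

def NN : ℕ := Tm ν (n + 1) + 1

def ww (j : ℕ) : ℤ :=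
  yy ν n (zz ν n j) + ((j : ℤ) - tt ν (zz ν n j)) * yy ν n (zz ν n j + 1)

def LL (j : ℕ) : ℤ := if j ≤ NN ν n then ww ν n j else yy ν n (n + 2)

def Valid (S : Finset ℕ) : Prop :=
  (∀ β ∈ S, β ≤ NN ν n) ∧
  ∀ β ∈ S, ∀ β' ∈ S, β < β' →
    zz ν n β < zz ν n β' ∧ ¬((β : ℤ) = tt ν (zz ν n β + 1) ∧ zz ν n β' = zz ν n β + 1)

def ff (S : Finset ℕ) : ℤ := ∑ β ∈ S, ww ν n β

/- ### basic lemmas on `tt`, `Tm` -/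

theorem tt_eq_Tm {m : ℕ} (hm : 1 ≤ m) : tt ν m = (Tm ν m : ℤ) := by
  rw [tt, if_neg (by omega), Tm]
  push_cast
  rfl

theorem tt_succ_sub (m : ℕ) :
    tt ν (m + 1) = tt ν m + (ν m : ℤ) + (if m = 0 then 1 else 0) := by
  rcases m with _ | m
  · simp [tt, Finset.sum_range_one]
  · rw [tt_eq_Tm ν (by omega), tt_eq_Tm ν (by omega), if_neg (by omega), Tm, Tm,
      Finset.sum_range_succ]
    push_cast
    ring

theorem Tm_mono {a b : ℕ} (h : a ≤ b) : Tm ν a ≤ Tm ν b :=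
  Finset.sum_le_sum_of_subset (Finset.range_subset_range.2 h)

theorem tt_mono {a b : ℕ} (h : a ≤ b) : tt ν a ≤ tt ν b := by
  rcases Nat.eq_zero_or_pos a with rfl | ha
  · rcases Nat.eq_zero_or_pos b with rfl | hb
    · exact le_refl _
    · rw [tt, if_pos rfl, tt_eq_Tm ν hb]
      omega
  · rw [tt_eq_Tm ν ha, tt_eq_Tm ν (le_trans ha h)]
    exact_mod_cast Tm_mono ν h

variable {ν n}

theorem Tm_lt (hν : ∀ i, i ≤ n → 1 ≤ ν i) {m : ℕ} (hm : m ≤ n) :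
    Tm ν m < Tm ν (m + 1) := by
  rw [Tm, Tm, Finset.sum_range_succ]
  have := hν m hm
  omega

/- ### zones -/

theorem zz_le (j : ℕ) : zz ν n j ≤ n := Nat.findGreatest_le n

theorem zz_spec {j : ℕ} (h : zz ν n j ≠ 0) : Tm ν (zz ν n j) < j :=
  Nat.findGreatest_of_ne_zero (P := fun m => Tm ν m < j) (n := n) (m := zz ν n j) rfl h

theorem zz_not_spec {j : ℕ} (h : zz ν n j < n) : ¬ Tm ν (zz ν n j + 1) < j :=
  Nat.findGreatest_is_greatest (P := fun m => Tm ν m < j) (n := n)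
    (Nat.lt_succ_self _) (by omega)

theorem zz_lb (j : ℕ) : tt ν (zz ν n j) < (j : ℤ) := by
  rcases Nat.eq_zero_or_pos (zz ν n j) with h0 | h0
  · rw [h0, tt, if_pos rfl]
    omega
  · have : Tm ν (zz ν n j) < j := zz_spec (by omega)
    rw [tt_eq_Tm ν h0]
    exact_mod_cast this

theorem zz_ub {j : ℕ} (hj : j ≤ NN ν n) :
    (j : ℤ) ≤ tt ν (zz ν n j + 1) + (if zz ν n j = n then 1 else 0) := by
  by_cases hn : zz ν n j = n
  · rw [if_pos hn, hn, tt_eq_Tm ν (by omega)]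
    have : j ≤ Tm ν (n + 1) + 1 := hj
    push_cast
    omega
  · rw [if_neg hn]
    have hlt : zz ν n j < n := lt_of_le_of_ne (zz_le j) hn
    have := zz_not_spec hlt
    rw [tt_eq_Tm (ν := ν) (m := zz ν n j + 1) (by omega)]
    simp only [not_lt] at this
    exact_mod_cast this

theorem zz_uniq {m j : ℕ} (hm : m ≤ n) (h1 : tt ν m < (j : ℤ))
    (h2 : (j : ℤ) ≤ tt ν (m + 1) + (if m = n then 1 else 0)) : zz ν n j = m := by
  have hge : m ≤ zz ν n j := by
    rcases Nat.eq_zero_or_pos m with rfl | hm0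
    · exact Nat.zero_le _
    · refine Nat.le_findGreatest hm ?_
      rw [tt_eq_Tm ν hm0] at h1
      exact_mod_cast h1
  have hle : zz ν n j ≤ m := by
    by_contra hlt
    push_neg at hlt
    have hmn : m < n := lt_of_lt_of_le hlt (zz_le _)
    rw [if_neg (show ¬ m = n by omega), tt_eq_Tm (ν := ν) (m := m + 1) (by omega)] at h2
    have hP : Tm ν (zz ν n j) < j := zz_spec (by omega)
    have h3 : Tm ν (m + 1) ≤ Tm ν (zz ν n j) := Tm_mono ν (by omega)
    have h4 : (j : ℤ) ≤ Tm ν (m + 1) := h2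
    have : (Tm ν (m + 1) : ℤ) ≤ (Tm ν (zz ν n j) : ℤ) := by exact_mod_cast h3
    have : (Tm ν (zz ν n j) : ℤ) < j := by exact_mod_cast hP
    omega
  omega

theorem zz_Tm (hν : ∀ i, i ≤ n → 1 ≤ ν i) {m : ℕ} (hm1 : 1 ≤ m) (hm : m ≤ n) :
    zz ν n (Tm ν m) = m - 1 := by
  have h1 : tt ν (m - 1) < (Tm ν m : ℤ) := by
    rcases Nat.eq_zero_or_pos (m - 1) with h0 | h0
    · rw [h0, tt, if_pos rfl]
      have : (0:ℤ) ≤ (Tm ν m : ℤ) := by positivity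
      omega
    · rw [tt_eq_Tm ν h0]
      have := Tm_lt hν (show m - 1 ≤ n by omega)
      have h2 : m - 1 + 1 = m := by omega
      rw [h2] at this
      exact_mod_cast this
  have h2 : (Tm ν m : ℤ) ≤ tt ν (m - 1 + 1) + (if m - 1 = n then 1 else 0) := by
    rw [show m - 1 + 1 = m by omega, tt_eq_Tm ν hm1]
    split <;> omega
  exact zz_uniq (by omega) h1 h2

/- ### positivity of yy -/

theorem yy_pos (hν : ∀ i, i ≤ n → 1 ≤ ν i) :
    ∀ m, m ≤ n + 1 → 1 ≤ yy ν n (m + 1) := by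
  intro m
  induction m using Nat.strong_induction_on with
  | _ m ih =>
    intro h
    match m with
    | 0 => exact le_refl 1
    | m + 1 =>
      have h1 := ih m (by omega) (by omega)
      have h0 : 0 ≤ yy ν n m := by
        rcases m with _ | m'
        · exact le_refl 0
        · exact le_trans (by omega) (ih m' (by omega) (by omega))
      have hc : 1 ≤ (ν m : ℤ) + (if m = 0 then 1 else 0) + (if m = n then 2 else 0) := by
        have := hν m (by omega)
        split <;> split <;> push_cast <;> omega
      show 1 ≤ yy ν n m + ((ν m : ℤ) + (if m = 0 then 1 else 0) + (if m = n then 2 else 0))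
        * yy ν n (m + 1)
      nlinarith

theorem yy_nonneg (hν : ∀ i, i ≤ n → 1 ≤ ν i) {m : ℕ} (hm : m ≤ n + 2) :
    0 ≤ yy ν n m := by
  rcases m with _ | m'
  · exact le_refl 0
  · exact le_trans (by omega) (yy_pos hν m' (by omega))

/- ### zz at 0 and NN -/

theorem zz_zero : zz ν n 0 = 0 := by
  rw [zz, Nat.findGreatest_eq_zero_iff]
  intro k _ _ h
  omega

theorem zz_NN : zz ν n (NN ν n) = n := by
  have h2 : tt ν (n + 1) = (Tm ν (n + 1) : ℤ) := tt_eq_Tm ν (by omega)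
  have h1 : tt ν n ≤ tt ν (n + 1) := tt_mono ν (by omega)
  refine zz_uniq le_rfl ?_ ?_
  · show _ < ((Tm ν (n + 1) + 1 : ℕ) : ℤ)
    push_cast
    omega
  · rw [if_pos rfl, h2]
    show ((Tm ν (n + 1) + 1 : ℕ) : ℤ) ≤ _
    push_cast
    omega

theorem LL_zero : LL ν n 0 = 1 := by
  rw [LL, if_pos (by omega), ww, zz_zero, tt, if_pos rfl]
  simp [yy]

/- ### the increment lemma -/

theorem LL_succ (hν : ∀ i, i ≤ n → 1 ≤ ν i) {j : ℕ} (hj : j ≤ NN ν n) :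
    LL ν n (j + 1) = LL ν n j + yy ν n (zz ν n j + 1) := by
  rcases Nat.lt_or_ge j (NN ν n) with hlt | hge
  · -- j < NN, so j+1 ≤ NN
    rw [LL, if_pos (show j + 1 ≤ NN ν n by omega), LL, if_pos hj]
    set m := zz ν n j with hm
    have hmn : m ≤ n := zz_le j
    have hlbj : tt ν m < (j : ℤ) := zz_lb j
    have hubj : (j : ℤ) ≤ tt ν (m + 1) + (if m = n then 1 else 0) := zz_ub hj
    by_cases hcase : ((j : ℤ) + 1) ≤ tt ν (m + 1) + (if m = n then 1 else 0)
    · -- same zone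
      have hz : zz ν n (j + 1) = m := by
        refine zz_uniq hmn ?_ ?_
        · push_cast; omega
        · push_cast; omega
      rw [ww, ww, hz, ← hm]
      push_cast
      ring
    · -- j is the top of zone m, and m < n
      have hmn' : m < n := by
        rcases Nat.lt_or_ge m n with h | h
        · exact h
        · exfalso
          have hmeq : m = n := by omega
          rw [if_pos hmeq, hmeq] at hubj hcase
          have h1 : (j : ℤ) = tt ν (n + 1) + 1 := by omega
          rw [tt_eq_Tm ν (by omega)] at h1
          have : j = Tm ν (n + 1) + 1 := by exact_mod_cast h1
          rw [NN] at hlt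
          omega
      rw [if_neg (by omega)] at hubj hcase
      have hjeq : (j : ℤ) = tt ν (m + 1) := by omega
      have hz : zz ν n (j + 1) = m + 1 := by
        refine zz_uniq (by omega) (by push_cast; omega) ?_
        have h1 : tt ν (m + 1) + 1 ≤ tt ν (m + 1 + 1) := by
          rw [tt_succ_sub ν (m + 1), if_neg (by omega)]
          have := hν (m + 1) (by omega)
          push_cast
          omega
        push_cast
        split <;> omega
      rw [ww, ww, hz, ← hm]
      have hstep : yy ν n (m + 2) = yy ν n m + (tt ν (m + 1) - tt ν m) * yy ν n (m + 1) := by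
        show yy ν n m + ((ν m : ℤ) + (if m = 0 then 1 else 0) + (if m = n then 2 else 0))
          * yy ν n (m + 1) = _
        rw [if_neg (show ¬ m = n by omega), tt_succ_sub ν m]
        ring
      push_cast
      rw [show ((j : ℤ) + 1 - tt ν (m + 1)) = 1 by omega, hstep]
      rw [hjeq]
      ring
  · -- j = NN
    have hje : j = NN ν n := by omega
    subst hje
    rw [LL, if_neg (by omega), LL, if_pos (le_refl _), ww, zz_NN]
    have hstep : yy ν n (n + 2) = yy ν n n + ((ν n : ℤ) + (if n = 0 then 1 else 0) + 2)
        * yy ν n (n + 1) := by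
      show yy ν n n + ((ν n : ℤ) + (if n = 0 then 1 else 0) + (if n = n then 2 else 0))
        * yy ν n (n + 1) = _
      rw [if_pos rfl]
    have hNt : ((NN ν n : ℕ) : ℤ) - tt ν n = (ν n : ℤ) + (if n = 0 then 1 else 0) + 1 := by
      have ha := tt_succ_sub ν n
      have hb : tt ν (n + 1) = (Tm ν (n + 1) : ℤ) := tt_eq_Tm ν (by omega)
      rw [NN]
      push_cast
      split_ifs at ha ⊢ <;> omega
    rw [hNt, hstep]
    ring

theorem LL_pos (hν : ∀ i, i ≤ n → 1 ≤ ν i) : ∀ j, j ≤ NN ν n + 1 → 1 ≤ LL ν n j := by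
  intro j
  induction j with
  | zero => intro _; rw [LL_zero]
  | succ j ihj =>
    intro h
    have h1 := ihj (by omega)
    have h2 := LL_succ hν (show j ≤ NN ν n by omega)
    have h3 : 1 ≤ yy ν n (zz ν n j + 1) := yy_pos hν _ (by
      have := zz_le (ν := ν) (n := n) j
      omega)
    omega

theorem ww_pos (hν : ∀ i, i ≤ n → 1 ≤ ν i) {j : ℕ} (hj : j ≤ NN ν n) : 1 ≤ ww ν n j := by
  have := LL_pos hν j (by omega)
  rwa [LL, if_pos hj] at this

theorem LL_Tm (hν : ∀ i, i ≤ n → 1 ≤ ν i) {m : ℕ} (hm : m ≤ n) :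
    LL ν n (Tm ν m) = yy ν n (m + 1) := by
  rcases Nat.eq_zero_or_pos m with rfl | hm0
  · rw [show Tm ν 0 = 0 from rfl, LL_zero]
    rfl
  · have hTle : Tm ν m ≤ NN ν n := by
      have := Tm_mono ν (show m ≤ n + 1 by omega)
      rw [NN]; omega
    rw [LL, if_pos hTle, ww, zz_Tm hν hm0 hm]
    have hm1 : m - 1 + 1 = m := by omega
    have hstep : yy ν n (m - 1 + 2) = yy ν n (m - 1) +
        (tt ν (m - 1 + 1) - tt ν (m - 1)) * yy ν n (m - 1 + 1) := by
      show yy ν n (m - 1) + ((ν (m - 1) : ℤ) + (if m - 1 = 0 then 1 else 0)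
        + (if m - 1 = n then 2 else 0)) * yy ν n (m - 1 + 1) = _
      rw [if_neg (show ¬ m - 1 = n by omega), tt_succ_sub ν (m - 1)]
      ring
    rw [hm1] at hstep
    rw [tt_eq_Tm (ν := ν) (m := m) (by omega)] at hstep
    have hy : yy ν n (m + 1) = yy ν n (m - 1 + 2) := by rw [show m - 1 + 2 = m + 1 by omega]
    rw [hm1, hy, hstep]

end TS

namespace TS

variable {ν : ℕ → ℕ} {n : ℕ}

theorem valid_subset {S S' : Finset ℕ} (h : Valid ν n S) (hsub : S' ⊆ S) : Valid ν n S' :=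
  ⟨fun β hb => h.1 β (hsub hb), fun β hb β' hb' hlt => h.2 β (hsub hb) β' (hsub hb') hlt⟩

theorem ff_nonneg (hν : ∀ i, i ≤ n → 1 ≤ ν i) {S : Finset ℕ} (h : Valid ν n S) :
    0 ≤ ff ν n S :=
  Finset.sum_nonneg fun β hb => le_trans zero_le_one (ww_pos hν (h.1 β hb))

theorem LL_eq_ww {j : ℕ} (hj : j ≤ NN ν n) : LL ν n j = ww ν n j := if_pos hj

theorem valid_empty : Valid ν n (∅ : Finset ℕ) :=
  ⟨fun β hb => absurd hb (Finset.notMem_empty β),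
   fun β hb => absurd hb (Finset.notMem_empty β)⟩

theorem main (hν : ∀ i, i ≤ n → 1 ≤ ν i) :
    ∀ j, j ≤ NN ν n + 1 →
      (∀ S, Valid ν n S → (∀ β ∈ S, β < j) → ff ν n S < LL ν n j) ∧
      (∀ c : ℤ, 0 ≤ c → c < LL ν n j →
        ∃! S : Finset ℕ, Valid ν n S ∧ (∀ β ∈ S, β < j) ∧ ff ν n S = c) := by
  intro j
  induction j using Nat.strong_induction_on with
  | _ j ih =>
    intro hj
    rcases j with _ | j
    · constructor
      · intro S hS hlt
        have hS0 : S = ∅ := Finset.eq_empty_of_forall_notMem fun β hb =>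
          Nat.not_lt_zero β (hlt β hb)
        rw [hS0, LL_zero]
        simp [ff]
      · intro c hc0 hc1
        rw [LL_zero] at hc1
        have hc : c = 0 := by omega
        refine ⟨∅, ⟨valid_empty, fun β hb => absurd hb (Finset.notMem_empty β),
          by simp [ff, hc]⟩, ?_⟩
        rintro S ⟨_, hSlt, _⟩
        exact Finset.eq_empty_of_forall_notMem fun β hb => Nat.not_lt_zero β (hSlt β hb)
    · -- j + 1
      have hjN : j ≤ NN ν n := by omega
      set m := zz ν n j with hm
      have hmn : m ≤ n := zz_le j
      have hTj : Tm ν m ≤ j := by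
        rcases Nat.eq_zero_or_pos m with h0 | h0
        · rw [h0]
          simp [Tm]
        · exact le_of_lt (zz_spec (by omega))
      have key1 : LL ν n (j + 1) = LL ν n j + LL ν n (Tm ν m) := by
        rw [LL_succ hν hjN, LL_Tm hν hmn, hm]
      have ihT := ih (Tm ν m) (by omega) (by omega)
      have ihj := ih j (by omega) (by omega)
      have hLT1 : 1 ≤ LL ν n (Tm ν m) := LL_pos hν _ (by omega)
      have hLj1 : 1 ≤ LL ν n j := LL_pos hν _ (by omega)
      have hww : LL ν n j = ww ν n j := LL_eq_ww hjN
      -- Lemma A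
      have lemA : ∀ S, Valid ν n S → (∀ β ∈ S, β < j + 1) → j ∈ S →
          ∀ β ∈ S.erase j, β < Tm ν m := by
        intro S hS hlt hjS β hb
        obtain ⟨hne, hbS⟩ := Finset.mem_erase.1 hb
        have hblt : β < j := lt_of_le_of_ne (by have := hlt β hbS; omega) hne
        obtain ⟨hzlt, htrig⟩ := hS.2 β hbS j hjS hblt
        have hm1 : 1 ≤ m := by omega
        have hβN : β ≤ NN ν n := hS.1 β hbS
        have hub := zz_ub (ν := ν) (n := n) hβN
        rw [if_neg (show ¬ zz ν n β = n by omega)] at hub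
        have h2 : tt ν (zz ν n β + 1) ≤ tt ν m := tt_mono ν (by omega)
        have h3 : tt ν m = (Tm ν m : ℤ) := tt_eq_Tm ν hm1
        have hβle : (β : ℤ) ≤ (Tm ν m : ℤ) := by
          rw [← h3]
          omega
        have hzzB : β = Tm ν m → zz ν n β = m - 1 := by
          intro heq
          rw [heq]
          exact zz_Tm hν hm1 hmn
        have hne2 : β ≠ Tm ν m := by
          intro heq
          apply htrig
          refine ⟨?_, ?_⟩
          · rw [hzzB heq, show m - 1 + 1 = m by omega, h3, heq]
          · rw [hzzB heq]
            omega
        have : (β : ℤ) ≠ (Tm ν m : ℤ) := by exact_mod_cast hne2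
        omega
      -- Lemma B
      have lemB : ∀ S', Valid ν n S' → (∀ β ∈ S', β < Tm ν m) →
          j ∉ S' ∧ Valid ν n (insert j S') ∧ (∀ β ∈ insert j S', β < j + 1) ∧
          ff ν n (insert j S') = ww ν n j + ff ν n S' := by
        intro S' hv' hlt'
        have hjnot : j ∉ S' := fun hjS => by have := hlt' j hjS; omega
        have hm1 : ∀ β ∈ S', 1 ≤ m := by
          intro β hb
          have := hlt' β hb
          rcases Nat.eq_zero_or_pos m with h0 | h0
          · rw [h0] at this
            simp [Tm] at this
          · omega
        have hzb : ∀ β ∈ S', zz ν n β < m ∧ (β : ℤ) < (Tm ν m : ℤ) := by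
          intro β hb
          have hm1' := hm1 β hb
          have hβlt : (β : ℤ) < (Tm ν m : ℤ) := by exact_mod_cast hlt' β hb
          constructor
          · by_contra hge
            push_neg at hge
            have h1 : tt ν m ≤ tt ν (zz ν n β) := tt_mono ν hge
            have h2 : tt ν (zz ν n β) < (β : ℤ) := zz_lb β
            have h3 : tt ν m = (Tm ν m : ℤ) := tt_eq_Tm ν hm1'
            omega
          · exact hβlt
        refine ⟨hjnot, ⟨?_, ?_⟩, ?_, ?_⟩
        · intro β hb
          rcases Finset.mem_insert.1 hb with rfl | hb'
          · exact hjN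
          · exact hv'.1 β hb'
        · intro β hb β' hb' hlt2
          rcases Finset.mem_insert.1 hb with rfl | hbS
          · rcases Finset.mem_insert.1 hb' with rfl | hb'S
            · omega
            · exfalso
              have := hlt' β' hb'S
              omega
          · rcases Finset.mem_insert.1 hb' with rfl | hb'S
            · -- β ∈ S', β' = j
              obtain ⟨hz1, hβlt⟩ := hzb β hbS
              have hm1' := hm1 β hbS
              refine ⟨by rw [← hm]; omega, ?_⟩
              rintro ⟨heq1, heq2⟩
              rw [← hm] at heq2
              have hzz : zz ν n β = m - 1 := by omega
              rw [hzz, show m - 1 + 1 = m by omega, tt_eq_Tm ν hm1'] at heq1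
              omega
            · exact hv'.2 β hbS β' hb'S hlt2
        · intro β hb
          rcases Finset.mem_insert.1 hb with rfl | hb'
          · omega
          · have := hlt' β hb'
            omega
        · rw [ff, Finset.sum_insert hjnot]
          rfl
      constructor
      · -- bound
        intro S hS hlt
        by_cases hjS : j ∈ S
        · have herase := lemA S hS hlt hjS
          have hSv' : Valid ν n (S.erase j) := valid_subset hS (Finset.erase_subset _ _)
          have h1 : ff ν n (S.erase j) < LL ν n (Tm ν m) := ihT.1 _ hSv' herase
          have h2 : ww ν n j + ff ν n (S.erase j) = ff ν n S :=
            Finset.add_sum_erase S (ww ν n) hjS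
          rw [key1]
          omega
        · have h1 : ff ν n S < LL ν n j := ihj.1 S hS (fun β hb =>
            lt_of_le_of_ne (by have := hlt β hb; omega) (fun h => hjS (h ▸ hb)))
          rw [key1]
          omega
      · -- existence and uniqueness
        intro c hc0 hc1
        rw [key1] at hc1
        by_cases hc : c < LL ν n j
        · obtain ⟨S, ⟨hSv, hSlt, hSf⟩, huniq⟩ := ihj.2 c hc0 hc
          refine ⟨S, ⟨hSv, fun β hb => by have := hSlt β hb; omega, hSf⟩, ?_⟩
          rintro S₂ ⟨hv2, hlt2, hf2⟩
          have hj2 : j ∉ S₂ := by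
            intro hjS
            have herase := lemA S₂ hv2 hlt2 hjS
            have h2 : ww ν n j + ff ν n (S₂.erase j) = ff ν n S₂ :=
              Finset.add_sum_erase S₂ (ww ν n) hjS
            have h3 : 0 ≤ ff ν n (S₂.erase j) :=
              ff_nonneg hν (valid_subset hv2 (Finset.erase_subset _ _))
            omega
          exact huniq S₂ ⟨hv2, fun β hb => lt_of_le_of_ne
            (by have := hlt2 β hb; omega) (fun h => hj2 (h ▸ hb)), hf2⟩
        · push_neg at hc
          obtain ⟨S', ⟨hv', hlt', hf'⟩, huniq'⟩ := ihT.2 (c - LL ν n j) (by omega) (by omega)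
          obtain ⟨hjnot, hvI, hltI, hfI⟩ := lemB S' hv' hlt'
          refine ⟨insert j S', ⟨hvI, hltI, by rw [hfI, hf']; omega⟩, ?_⟩
          rintro S₂ ⟨hv2, hlt2, hf2⟩
          have hj2 : j ∈ S₂ := by
            by_contra hj2
            have h1 : ff ν n S₂ < LL ν n j := ihj.1 S₂ hv2 (fun β hb =>
              lt_of_le_of_ne (by have := hlt2 β hb; omega) (fun h => hj2 (h ▸ hb)))
            omega
          have herase := lemA S₂ hv2 hlt2 hj2
          have h2 : ww ν n j + ff ν n (S₂.erase j) = ff ν n S₂ :=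
            Finset.add_sum_erase S₂ (ww ν n) hj2
          have heq := huniq' (S₂.erase j) ⟨valid_subset hv2 (Finset.erase_subset _ _),
            herase, by omega⟩
          rw [← heq]
          exact (Finset.insert_erase hj2).symm

end TS

namespace TS

variable {ν : ℕ → ℕ} {n : ℕ}

theorem tt_ge_neg_one (ν : ℕ → ℕ) (a : ℕ) : -1 ≤ tt ν a := by
  rcases Nat.eq_zero_or_pos a with rfl | ha
  · rw [tt, if_pos rfl]
  · rw [tt_eq_Tm ν ha]
    have : (0 : ℤ) ≤ (Tm ν a : ℤ) := by positivity
    omega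

theorem tt_le_NN (ν : ℕ → ℕ) (n : ℕ) {a : ℕ} (ha : a ≤ n + 1) :
    tt ν a + 1 ≤ (NN ν n : ℤ) := by
  have h1 : tt ν a ≤ tt ν (n + 1) := tt_mono ν ha
  have h2 : tt ν (n + 1) = (Tm ν (n + 1) : ℤ) := tt_eq_Tm ν (by omega)
  rw [NN]
  push_cast
  omega

theorem sigma_props (hν : ∀ i, i ≤ n → 1 ≤ ν i) {k : ℕ} {ξ : Fin k → ℕ} {β : Fin k → ℤ}
    (h1 : StrictMono ξ) (h2 : ∀ i, ξ i ≤ n)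
    (h3 : ∀ i, tt ν (ξ i) < β i ∧ β i ≤ tt ν (ξ i + 1) + (if ξ i = n then 1 else 0))
    (h4 : ∀ i j : Fin k, (i : ℕ) + 1 = (j : ℕ) → β i = tt ν (ξ i + 1) → ξ i + 2 ≤ ξ j) :
    (∀ i, ((β i).toNat : ℤ) = β i) ∧
    (∀ i, zz ν n ((β i).toNat) = ξ i) ∧
    (∀ i, (β i).toNat ≤ NN ν n) ∧
    StrictMono (fun i => (β i).toNat) ∧
    Valid ν n (Finset.univ.image fun i => (β i).toNat) ∧
    ff ν n (Finset.univ.image fun i => (β i).toNat)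
      = ∑ i, (yy ν n (ξ i) + (β i - tt ν (ξ i)) * yy ν n (ξ i + 1)) := by
  have h0 : ∀ i, 0 ≤ β i := by
    intro i
    have := (h3 i).1
    have := tt_ge_neg_one ν (ξ i)
    omega
  have hcast : ∀ i, ((β i).toNat : ℤ) = β i := fun i => Int.toNat_of_nonneg (h0 i)
  have hN : ∀ i, (β i).toNat ≤ NN ν n := by
    intro i
    have hub := (h3 i).2
    have h5 : tt ν (ξ i + 1) + (if ξ i = n then 1 else 0) + 1 ≤ (NN ν n : ℤ) + 1 := by
      have := tt_le_NN ν n (show ξ i + 1 ≤ n + 1 by have := h2 i; omega)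
      split <;> omega
    have := hcast i
    omega
  have hz : ∀ i, zz ν n ((β i).toNat) = ξ i := by
    intro i
    refine zz_uniq (h2 i) ?_ ?_
    · rw [hcast i]; exact (h3 i).1
    · rw [hcast i]; exact (h3 i).2
  have hsm : StrictMono (fun i => (β i).toNat) := by
    intro i i' hii
    have hξ : ξ i < ξ i' := h1 hii
    have hξn : ¬ ξ i = n := by have := h2 i'; omega
    have hub := (h3 i).2
    rw [if_neg hξn] at hub
    have hmono : tt ν (ξ i + 1) ≤ tt ν (ξ i') := tt_mono ν (by omega)
    have hlb := (h3 i').1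
    have := hcast i
    have := hcast i'
    simp only
    omega
  have hinj : ∀ x ∈ (Finset.univ : Finset (Fin k)), ∀ y ∈ Finset.univ,
      (β x).toNat = (β y).toNat → x = y := fun x _ y _ h => hsm.injective h
  -- the trigger analysis
  have htrig : ∀ i i' : Fin k, i < i' →
      ¬(((β i).toNat : ℤ) = tt ν (zz ν n ((β i).toNat) + 1) ∧
        zz ν n ((β i').toNat) = zz ν n ((β i).toNat) + 1) := by
    rintro i i' hii ⟨he1, he2⟩
    rw [hz i, hz i'] at he2
    rw [hz i, hcast i] at he1
    have hle : (i : ℕ) + 1 ≤ (i' : ℕ) := hii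
    rcases eq_or_lt_of_le hle with heq | hlt
    · have := h4 i i' heq he1
      omega
    · have hk1 : (i : ℕ) + 1 < k := lt_trans hlt i'.isLt
      have ha : i < (⟨(i : ℕ) + 1, hk1⟩ : Fin k) := by
        rw [Fin.lt_def]
        simp
      have hb : (⟨(i : ℕ) + 1, hk1⟩ : Fin k) < i' := by
        rw [Fin.lt_def]
        simpa using hlt
      have := h1 ha
      have := h1 hb
      omega
  refine ⟨hcast, hz, hN, hsm, ⟨?_, ?_⟩, ?_⟩
  · intro x hx
    obtain ⟨i, _, rfl⟩ := Finset.mem_image.1 hx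
    exact hN i
  · intro x hx x' hx' hxx
    obtain ⟨i, _, rfl⟩ := Finset.mem_image.1 hx
    obtain ⟨i', _, rfl⟩ := Finset.mem_image.1 hx'
    have hii : i < i' := by
      by_contra hge
      push_neg at hge
      rcases eq_or_lt_of_le hge with rfl | hlt
      · omega
      · have := hsm hlt
        simp only at this
        omega
    refine ⟨?_, htrig i i' hii⟩
    rw [hz i, hz i']
    exact h1 hii
  · rw [ff, Finset.sum_image hinj]
    apply Finset.sum_congr rfl
    intro i _
    rw [ww, hz i, hcast i]

end TS

/-- Takahashi–Suzuki decomposition: for coprime $p < p' < 2p$ with continued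
fraction data $\nu_0,\dots,\nu_n$ of $p'/(p'-p)$, every $1\le b<p'$ admits a
unique decomposition $b=\sum_{i=1}^k l_{\beta_i+1}$ (where
$l_{j+1}=y_{m-1}+(j-t_m)y_m$ for $t_m<j\le t_{m+1}+\delta_{m,n}$) with zones
$\xi_1<\cdots<\xi_k$ and $\xi_{i+1}\ge\xi_i+2$ whenever $\beta_i=t_{\xi_i+1}$. -/
theorem takahashi_suzuki_decomposition (p p' n : ℕ) (ν : ℕ → ℕ)
    (hco : Nat.Coprime p p') (h1 : p < p') (h2 : p' < 2 * p)
    (hν : ∀ i, i ≤ n → 1 ≤ ν i)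
    (hcf : (p' : ℚ) / ((p' : ℚ) - p) = 1 + cf ν n 0)
    (b : ℕ) (hb1 : 1 ≤ b) (hb2 : b < p') :
    ∃! d : Σ k : ℕ, (Fin k → ℕ) × (Fin k → ℤ),
      StrictMono d.2.1 ∧
      (∀ i, d.2.1 i ≤ n) ∧
      (∀ i, tt ν (d.2.1 i) < d.2.2 i ∧
        d.2.2 i ≤ tt ν (d.2.1 i + 1) + (if d.2.1 i = n then 1 else 0)) ∧
      (∀ i j : Fin d.1, (i : ℕ) + 1 = (j : ℕ) → d.2.2 i = tt ν (d.2.1 i + 1) →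
        d.2.1 i + 2 ≤ d.2.1 j) ∧
      (b : ℤ) = ∑ i, (yy ν n (d.2.1 i) + (d.2.2 i - tt ν (d.2.1 i)) * yy ν n (d.2.1 i + 1)) := by
  have hp' : (p' : ℤ) = yy ν n (n + 2) := TS.pp_eq p p' n ν hco h1 hν hcf
  have hLL : TS.LL ν n (TS.NN ν n + 1) = yy ν n (n + 2) := by
    rw [TS.LL, if_neg (by omega)]
  obtain ⟨S, ⟨hSv, hSlt, hSf⟩, hSuniq⟩ :=
    (TS.main hν (TS.NN ν n + 1) le_rfl).2 (b : ℤ) (by positivity)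
      (by rw [hLL, ← hp']; exact_mod_cast hb2)
  set k := S.card with hk
  set emb : Fin k ↪o ℕ := S.orderEmbOfFin rfl with hemb
  have hmem : ∀ i, emb i ∈ S := fun i => Finset.orderEmbOfFin_mem S rfl i
  have hembN : ∀ i, emb i ≤ TS.NN ν n := fun i => hSv.1 _ (hmem i)
  set ξ : Fin k → ℕ := fun i => TS.zz ν n (emb i) with hξ
  set β : Fin k → ℤ := fun i => ((emb i : ℕ) : ℤ) with hβ
  have c1 : StrictMono ξ := by
    intro i i' hii
    exact (hSv.2 (emb i) (hmem i) (emb i') (hmem i') (emb.strictMono hii)).1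
  have c2 : ∀ i, ξ i ≤ n := fun i => TS.zz_le _
  have c3 : ∀ i, tt ν (ξ i) < β i ∧ β i ≤ tt ν (ξ i + 1) + (if ξ i = n then 1 else 0) :=
    fun i => ⟨TS.zz_lb _, TS.zz_ub (hembN i)⟩
  have c4 : ∀ i j : Fin k, (i : ℕ) + 1 = (j : ℕ) → β i = tt ν (ξ i + 1) →
      ξ i + 2 ≤ ξ j := by
    intro i j hij hti
    have hij' : i < j := by rw [Fin.lt_def]; omega
    obtain ⟨hzlt, htrig⟩ := hSv.2 (emb i) (hmem i) (emb j) (hmem j) (emb.strictMono hij')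
    by_contra hcon
    push_neg at hcon
    have e1 : ξ i = TS.zz ν n (emb i) := rfl
    have e2 : ξ j = TS.zz ν n (emb j) := rfl
    have hti' : ((emb i : ℕ) : ℤ) = tt ν (TS.zz ν n (emb i) + 1) := by
      rw [← e1]
      exact hti
    rw [e1, e2] at hcon
    exact htrig ⟨hti', by omega⟩
  have htoNat : ∀ i, (β i).toNat = emb i := by
    intro i
    rw [hβ]
    exact Int.toNat_natCast _
  have hprops := TS.sigma_props hν c1 c2 c3 c4
  obtain ⟨hgc, hgz, hgN, hgsm, hgval, hgff⟩ := hprops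
  have himg : (Finset.univ.image fun i => (β i).toNat) = S := by
    apply Finset.eq_of_subset_of_card_le
    · intro x hx
      obtain ⟨i, _, rfl⟩ := Finset.mem_image.1 hx
      rw [htoNat i]
      exact hmem i
    · rw [Finset.card_image_of_injective _ hgsm.injective, Finset.card_univ,
        Fintype.card_fin]
  have c5 : (b : ℤ) = ∑ i, (yy ν n (ξ i) + (β i - tt ν (ξ i)) * yy ν n (ξ i + 1)) := by
    rw [← hgff, himg, hSf]
  refine ⟨⟨k, ξ, β⟩, ⟨c1, c2, c3, c4, c5⟩, ?_⟩
  rintro ⟨k₂, ξ₂, β₂⟩ ⟨g1, g2, g3, g4, g5⟩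
  dsimp only at g1 g2 g3 g4 g5 ⊢
  obtain ⟨ggc, ggz, ggN, ggsm, ggval, ggff⟩ := TS.sigma_props hν g1 g2 g3 g4
  have hS₂ : (Finset.univ.image fun i => (β₂ i).toNat) = S := by
    apply hSuniq
    refine ⟨ggval, ?_, ?_⟩
    · intro x hx
      obtain ⟨i, _, rfl⟩ := Finset.mem_image.1 hx
      have := ggN i
      omega
    · rw [ggff]
      exact g5.symm
  have hk₂ : k₂ = k := by
    rw [hk, ← hS₂, Finset.card_image_of_injective _ ggsm.injective, Finset.card_univ,
      Fintype.card_fin]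
  subst hk₂
  have hbn2 : (fun i => (β₂ i).toNat) = ⇑(S.orderEmbOfFin rfl) := by
    apply Finset.orderEmbOfFin_unique
    · intro i
      rw [← hS₂]
      exact Finset.mem_image_of_mem _ (Finset.mem_univ i)
    · exact ggsm
  have hβeq : β₂ = β := by
    funext i
    have h1' : ((β₂ i).toNat : ℤ) = β₂ i := ggc i
    rw [← h1', hβ]
    have : (β₂ i).toNat = emb i := by
      rw [hemb]
      exact congrFun hbn2 i
    rw [this]
  have hξeq : ξ₂ = ξ := by
    funext i
    have h1' : TS.zz ν n ((β₂ i).toNat) = ξ₂ i := ggz i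
    rw [← h1', hξ]
    have : (β₂ i).toNat = emb i := by
      rw [hemb]
      exact congrFun hbn2 i
    rw [this]
  rw [hβeq, hξeq]
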